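/- Under the sample selection model and Assumption CV, the unobservable ε is independent of Z conditional on the control function V, in the selected population: ε ⊥⊥ Z | V, C > 0. That is, conditional on the event {C > 0} and on V, the conditional distribution of ε given Z does not depend on Z. -/

import Mathlib

/-!
STATEMENT 0: Existence of a control function (Lemma 1 of the paper).
Under the sample selection model `Y = g(X, ε)` if `C > 0`, `C = max(h(Z, η), 0)`,
and Assumption CV ((ε, η) ⊥⊥ Z, η ~ U(0,1), t ↦ h(z,t) strictly increasing a.s.),
the unobservable ε is independent of Z conditional on the control function
V := F_C(C | Z) in the selected population {C > 0}.
-/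

open MeasureTheory ProbabilityTheory Set Filter
open scoped ENNReal

namespace CFaux

/-- Violation of the strict-monotone-graph relation between two points `p q : ℝ × ℝ`,
where each point is a pair `(t, c)` with `c` playing the role of `max (h z t) 0`. -/
def viol (p q : ℝ × ℝ) : Prop := p.1 < q.1 ∧ (q.2 < p.2 ∨ (0 < q.2 ∧ q.2 ≤ p.2))

def bad (p q : ℝ × ℝ) : Prop := viol p q ∨ viol q p

lemma bad_symm {p q : ℝ × ℝ} (h : bad p q) : bad q p := h.symm

lemma measurableSet_bad : MeasurableSet {x : (ℝ × ℝ) × (ℝ × ℝ) | bad x.1 x.2} := by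
  have m11 : Measurable fun x : (ℝ × ℝ) × (ℝ × ℝ) => x.1.1 := measurable_fst.fst
  have m12 : Measurable fun x : (ℝ × ℝ) × (ℝ × ℝ) => x.1.2 := measurable_fst.snd
  have m21 : Measurable fun x : (ℝ × ℝ) × (ℝ × ℝ) => x.2.1 := measurable_snd.fst
  have m22 : Measurable fun x : (ℝ × ℝ) × (ℝ × ℝ) => x.2.2 := measurable_snd.snd
  have : {x : (ℝ × ℝ) × (ℝ × ℝ) | bad x.1 x.2} =
      ({x : (ℝ × ℝ) × (ℝ × ℝ) | x.1.1 < x.2.1} ∩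
        ({x : (ℝ × ℝ) × (ℝ × ℝ) | x.2.2 < x.1.2} ∪
          ({x : (ℝ × ℝ) × (ℝ × ℝ) | 0 < x.2.2} ∩ {x : (ℝ × ℝ) × (ℝ × ℝ) | x.2.2 ≤ x.1.2}))) ∪
      ({x : (ℝ × ℝ) × (ℝ × ℝ) | x.2.1 < x.1.1} ∩
        ({x : (ℝ × ℝ) × (ℝ × ℝ) | x.1.2 < x.2.2} ∪
          ({x : (ℝ × ℝ) × (ℝ × ℝ) | 0 < x.1.2} ∩ {x : (ℝ × ℝ) × (ℝ × ℝ) | x.1.2 ≤ x.2.2}))) := by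
    ext x
    simp only [mem_setOf_eq, mem_union, mem_inter_iff, bad, viol]
  rw [this]
  exact ((measurableSet_lt m11 m21).inter ((measurableSet_lt m22 m12).union
      ((measurableSet_lt measurable_const m22).inter (measurableSet_le m22 m12)))).union
    ((measurableSet_lt m21 m11).inter ((measurableSet_lt m12 m22).union
      ((measurableSet_lt measurable_const m12).inter (measurableSet_le m12 m22))))

/-- The key descriptive-set-theoretic selection: a Borel set `D` containing the graph points
`(Z ω, (η ω, C ω))` whose fibers are strictly-monotone-compatible relations. -/
lemma exists_graph {dz : ℕ} {Ω : Type} [MeasurableSpace Ω] [StandardBorelSpace Ω]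
    (Z : Ω → Fin dz → ℝ) (η C : Ω → ℝ) (h : (Fin dz → ℝ) → ℝ → ℝ)
    (hZ : Measurable Z) (hη : Measurable η) (hC : Measurable C)
    (M : Set Ω) (hMmeas : MeasurableSet M)
    (hgood : ∀ ω ∉ M, StrictMono (h (Z ω)) ∧ η ω ∈ Ioo (0:ℝ) 1)
    (hCdef : ∀ ω, C ω = max (h (Z ω) (η ω)) 0) :
    ∃ D : Set ((Fin dz → ℝ) × (ℝ × ℝ)), MeasurableSet D ∧
      (∀ ω ∉ M, (Z ω, (η ω, C ω)) ∈ D) ∧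
      (∀ x ∈ D, ∀ y ∈ D, x.1 = y.1 → ¬ bad x.2 y.2) ∧
      (∀ x ∈ D, x.2.1 ∈ Ioo (0:ℝ) 1 ∧ 0 ≤ x.2.2) := by
  classical
  set W : Ω → (Fin dz → ℝ) × (ℝ × ℝ) := fun ω => (Z ω, (η ω, C ω)) with hW
  have hWmeas : Measurable W := hZ.prodMk (hη.prodMk hC)
  -- good pairs are never bad
  have hpair : ∀ ω ∉ M, ∀ ω' ∉ M, Z ω = Z ω' → ¬ bad (η ω, C ω) (η ω', C ω') := by
    have key : ∀ ω ∉ M, ∀ ω' ∉ M, Z ω = Z ω' → ¬ viol (η ω, C ω) (η ω', C ω') := by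
      intro ω hω ω' hω' hzz hv
      obtain ⟨hlt, hcase⟩ := hv
      simp only at hlt hcase
      have hsm := (hgood ω hω).1
      have hmono : h (Z ω) (η ω) < h (Z ω) (η ω') := hsm hlt
      have hCω : C ω = max (h (Z ω) (η ω)) 0 := hCdef ω
      have hCω' : C ω' = max (h (Z ω) (η ω')) 0 := by rw [hCdef ω', ← hzz]
      have hle : C ω ≤ C ω' := by
        rw [hCω, hCω']; exact max_le_max hmono.le le_rfl
      rcases hcase with hc | ⟨hpos, hle'⟩
      · exact absurd hle (not_le.mpr hc)
      · -- 0 < C ω' and C ω' ≤ C ω, so C ω = C ω'; but strictness gives C ω < C ω'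
        have h1 : 0 < h (Z ω) (η ω') := by
          by_contra hh
          push_neg at hh
          rw [hCω', max_eq_right hh] at hpos
          exact lt_irrefl _ hpos
        have h2 : C ω < C ω' := by
          rw [hCω, hCω', max_eq_left h1.le]
          exact max_lt hmono h1
        exact absurd hle' (not_le.mpr h2)
    intro ω hω ω' hω' hzz hb
    rcases hb with hv | hv
    · exact key ω hω ω' hω' hzz hv
    · exact key ω' hω' ω hω hzz.symm hv
  -- E : analytic graph set
  set E : Set ((Fin dz → ℝ) × (ℝ × ℝ)) := W '' Mᶜ with hE
  have hEanal : AnalyticSet E := hMmeas.compl.analyticSet_image hWmeas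
  -- T : points sharing a fiber with an E-point and bad w.r.t. it
  set T : Set ((Fin dz → ℝ) × (ℝ × ℝ)) :=
    (fun x : Ω × (ℝ × ℝ) => (Z x.1, x.2)) ''
      {x : Ω × (ℝ × ℝ) | x.1 ∉ M ∧ bad (η x.1, C x.1) x.2} with hT
  have hTanal : AnalyticSet T := by
    refine MeasurableSet.analyticSet_image ?_ (hZ.comp measurable_fst |>.prodMk measurable_snd)
    have : {x : Ω × (ℝ × ℝ) | x.1 ∉ M ∧ bad (η x.1, C x.1) x.2} =
        (Mᶜ ×ˢ (univ : Set (ℝ × ℝ))) ∩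
          ((fun x : Ω × (ℝ × ℝ) => ((η x.1, C x.1), x.2)) ⁻¹' {y | bad y.1 y.2}) := by
      ext x; simp only [mem_inter_iff, mem_prod, mem_compl_iff, mem_univ, and_true,
        mem_preimage, mem_setOf_eq]
    rw [this]
    exact (hMmeas.compl.prod MeasurableSet.univ).inter
      (measurableSet_bad.preimage
        (((hη.comp measurable_fst).prodMk (hC.comp measurable_fst)).prodMk measurable_snd))
  have hET : Disjoint E T := by
    rw [Set.disjoint_left]
    rintro x ⟨ω, hω, rfl⟩ ⟨⟨ω', p⟩, ⟨hω', hbad⟩, hxeq⟩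
    have hz : Z ω' = Z ω := congrArg Prod.fst hxeq
    have hp : p = (η ω, C ω) := congrArg Prod.snd hxeq
    subst hp
    exact hpair ω' hω' ω hω hz hbad
  obtain ⟨D₀, hED₀, hTD₀, hD₀m⟩ := hEanal.measurablySeparable hTanal hET
  -- T₁ : points sharing a fiber with a D₀-point and bad w.r.t. it
  set T₁ : Set ((Fin dz → ℝ) × (ℝ × ℝ)) :=
    (fun q : ((Fin dz → ℝ) × (ℝ × ℝ)) × (ℝ × ℝ) => (q.1.1, q.2)) ''
      {q : ((Fin dz → ℝ) × (ℝ × ℝ)) × (ℝ × ℝ) | q.1 ∈ D₀ ∧ bad q.1.2 q.2} with hT₁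
  have hT₁anal : AnalyticSet T₁ := by
    refine MeasurableSet.analyticSet_image ?_
      ((measurable_fst.fst).prodMk measurable_snd)
    have : {q : ((Fin dz → ℝ) × (ℝ × ℝ)) × (ℝ × ℝ) | q.1 ∈ D₀ ∧ bad q.1.2 q.2} =
        (D₀ ×ˢ (univ : Set (ℝ × ℝ))) ∩
          ((fun q : ((Fin dz → ℝ) × (ℝ × ℝ)) × (ℝ × ℝ) => (q.1.2, q.2)) ⁻¹' {y | bad y.1 y.2}) := by
      ext q; simp only [mem_inter_iff, mem_prod, mem_univ, and_true, mem_preimage, mem_setOf_eq]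
    rw [this]
    exact (hD₀m.prod MeasurableSet.univ).inter
      (measurableSet_bad.preimage ((measurable_fst.snd).prodMk measurable_snd))
  have hET₁ : Disjoint E T₁ := by
    rw [Set.disjoint_left]
    rintro x ⟨ω, hω, rfl⟩ ⟨⟨y, p⟩, ⟨hyD₀, hbad⟩, hxeq⟩
    -- then y ∈ T, contradicting Disjoint T D₀
    have hy1 : y.1 = Z ω := congrArg Prod.fst hxeq
    have hp : p = (η ω, C ω) := congrArg Prod.snd hxeq
    subst hp
    have hyT : y ∈ T := by
      refine ⟨(ω, y.2), ⟨hω, bad_symm hbad⟩, ?_⟩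
      simp only [← hy1]
    exact (Set.disjoint_left.mp hTD₀) hyT hyD₀
  obtain ⟨u₁, hEu₁, hT₁u₁, hu₁m⟩ := hEanal.measurablySeparable hT₁anal hET₁
  obtain ⟨u₂, hEu₂, hD₀cu₂, hu₂m⟩ :=
    hEanal.measurablySeparable hD₀m.compl.analyticSet
      (by rw [Set.disjoint_compl_right_iff_subset]; exact hED₀)
  set D : Set ((Fin dz → ℝ) × (ℝ × ℝ)) :=
    (u₁ ∩ u₂) ∩ {x : (Fin dz → ℝ) × (ℝ × ℝ) | x.2.1 ∈ Ioo (0:ℝ) 1 ∧ 0 ≤ x.2.2} with hD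
  have hDm : MeasurableSet D := by
    refine ((hu₁m.inter hu₂m).inter ?_)
    exact ((measurableSet_lt measurable_const measurable_snd.fst).inter
        (measurableSet_lt measurable_snd.fst measurable_const)).inter
      (measurableSet_le measurable_const measurable_snd.snd)
  have hDsub₀ : D ⊆ D₀ := by
    intro x hx
    by_contra hxc
    exact (Set.disjoint_left.mp hD₀cu₂) hxc hx.1.2
  refine ⟨D, hDm, ?_, ?_, ?_⟩
  · intro ω hω
    have hmem : W ω ∈ E := ⟨ω, hω, rfl⟩
    refine ⟨⟨hEu₁ hmem, hEu₂ hmem⟩, (hgood ω hω).2, ?_⟩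
    rw [hCdef ω]; exact le_max_right _ _
  · intro x hx y hy hxy hbad
    -- then y ∈ T₁ via q := (x, y.2)
    have hyT₁ : y ∈ T₁ := by
      refine ⟨(x, y.2), ⟨hDsub₀ hx, hbad⟩, ?_⟩
      simp only [hxy]
    exact (Set.disjoint_left.mp hT₁u₁) hyT₁ hy.1.1
  · exact fun x hx => hx.2


/-- continuity from above of `c ↦ m {p | g p ≤ c}` along rationals. -/
lemma measure_proj_le_iInf {β : Type*} [MeasurableSpace β] (m : Measure β)
    [IsFiniteMeasure m] {g : β → ℝ} (hg : Measurable g) (c : ℝ) :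
    m {p | g p ≤ c} = ⨅ q : {q : ℚ // c < (q:ℝ)}, m {p | g p ≤ (q:ℝ)} := by
  obtain ⟨q₀, hq₀⟩ := exists_rat_gt c
  haveI : Nonempty {q : ℚ // c < (q:ℝ)} := ⟨⟨q₀, hq₀⟩⟩
  have hset : ⋂ q : {q : ℚ // c < (q:ℝ)}, {p | g p ≤ ((q : ℚ) : ℝ)} = {p | g p ≤ c} := by
    ext p
    simp only [mem_iInter, mem_setOf_eq]
    constructor
    · intro hp
      by_contra hc
      push_neg at hc
      obtain ⟨q, hq1, hq2⟩ := exists_rat_btwn hc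
      exact absurd (hp ⟨q, hq1⟩) (not_le.mpr hq2)
    · intro hp q
      exact hp.trans q.2.le
  rw [← hset]
  refine Directed.measure_iInter (fun q => (hg measurableSet_Iic).nullMeasurableSet) ?_ ?_
  · intro q₁ q₂
    refine ⟨⟨min q₁.1 q₂.1, ?_⟩, ?_, ?_⟩
    · rw [Rat.cast_min]; exact lt_min q₁.2 q₂.2
    · intro p hp
      simp only [mem_setOf_eq] at hp ⊢
      exact hp.trans (by rw [Rat.cast_min]; exact min_le_left _ _)
    · intro p hp
      simp only [mem_setOf_eq] at hp ⊢
      exact hp.trans (by rw [Rat.cast_min]; exact min_le_right _ _)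
  · exact ⟨⟨q₀, hq₀⟩, measure_ne_top _ _⟩

/-- joint measurability of `(z, c) ↦ κ z {p | p.2 ≤ c}`. -/
lemma measurable_phi {𝒵 : Type*} [MeasurableSpace 𝒵] (κ : Kernel 𝒵 (ℝ × ℝ))
    [IsMarkovKernel κ] :
    Measurable (fun x : 𝒵 × ℝ => κ x.1 {p : ℝ × ℝ | p.2 ≤ x.2}) := by
  have heq : (fun x : 𝒵 × ℝ => κ x.1 {p : ℝ × ℝ | p.2 ≤ x.2}) =
      fun x => ⨅ q : ℚ, if x.2 < (q:ℝ) then κ x.1 {p : ℝ × ℝ | p.2 ≤ (q:ℝ)} else 1 := by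
    funext x
    rw [measure_proj_le_iInf (κ x.1) measurable_snd x.2]
    apply le_antisymm
    · refine le_iInf fun q => ?_
      split_ifs with hq
      · exact iInf_le_of_le ⟨q, hq⟩ le_rfl
      · obtain ⟨q₀, hq₀⟩ := exists_rat_gt x.2
        refine iInf_le_of_le ⟨q₀, hq₀⟩ ?_
        calc κ x.1 {p : ℝ × ℝ | p.2 ≤ (q₀:ℝ)} ≤ κ x.1 univ := measure_mono (subset_univ _)
        _ = 1 := measure_univ
    · refine le_iInf fun q => ?_
      refine iInf_le_of_le q.1 ?_
      rw [if_pos q.2]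
  rw [heq]
  refine Measurable.iInf fun q => Measurable.ite ?_ ?_ measurable_const
  · exact measurableSet_lt measurable_snd measurable_const
  · exact (Kernel.measurable_coe κ (measurableSet_le measurable_snd measurable_const)).comp
      measurable_fst

/-- A Stieltjes function agreeing with the CDF of a probability measure on rationals agrees
with it everywhere. -/
lemma stieltjes_eq (f : StieltjesFunction ℝ) (m : Measure ℝ) [IsProbabilityMeasure m]
    (h0 : ∀ x, 0 ≤ f x) (hq : ∀ q : ℚ, ENNReal.ofReal (f q) = m (Iic (q:ℝ))) (c : ℝ) :
    ENNReal.ofReal (f c) = m (Iic c) := by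
  have hIic : m (Iic c) = ⨅ q : {q : ℚ // c < (q:ℝ)}, m (Iic ((q : ℚ) : ℝ)) := by
    have := measure_proj_le_iInf m measurable_id c
    simpa only [Iic, setOf, id] using this
  apply le_antisymm
  · rw [hIic]
    refine le_iInf fun q => ?_
    rw [← hq q.1]
    exact ENNReal.ofReal_le_ofReal (f.mono q.2.le)
  · have key : ∀ ε : ℝ, 0 < ε → m (Iic c) ≤ ENNReal.ofReal (f c + ε) := by
      intro ε hε
      have hrc : ContinuousWithinAt f (Ici c) c := f.right_continuous c
      have hmem : {x | f x < f c + ε} ∈ nhdsWithin c (Ici c) :=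
        hrc (Iio_mem_nhds (by linarith))
      have hmem' : {x | f x < f c + ε} ∈ nhdsWithin c (Ioi c) :=
        nhdsWithin_mono c Ioi_subset_Ici_self hmem
      rw [mem_nhdsGT_iff_exists_Ioo_subset] at hmem'
      obtain ⟨u, hu, hsub⟩ := hmem'
      obtain ⟨q, hq1, hq2⟩ := exists_rat_btwn (mem_Ioi.mp hu)
      have hfq : f q < f c + ε := hsub ⟨hq1, hq2⟩
      calc m (Iic c) ≤ m (Iic (q:ℝ)) := measure_mono (Iic_subset_Iic.mpr hq1.le)
        _ = ENNReal.ofReal (f q) := (hq q).symm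
        _ ≤ ENNReal.ofReal (f c + ε) := ENNReal.ofReal_le_ofReal hfq.le
    have h2 : (m (Iic c)).toReal ≤ f c := by
      refine le_of_forall_pos_le_add fun ε hε => ?_
      have := key ε hε
      have h3 := ENNReal.toReal_mono (by simp) this
      rwa [ENNReal.toReal_ofReal (by linarith [h0 c])] at h3
    calc m (Iic c) = ENNReal.ofReal (m (Iic c)).toReal :=
          (ENNReal.ofReal_toReal (measure_ne_top _ _)).symm
      _ ≤ ENNReal.ofReal (f c) := ENNReal.ofReal_le_ofReal h2

/-- Pushing a compProd forward in the second variable. -/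
lemma compProd_map_right {α β γ : Type*} [MeasurableSpace α] [MeasurableSpace β]
    [MeasurableSpace γ] (μ : Measure α) [SFinite μ] (κ : Kernel α β) [IsSFiniteKernel κ]
    {f : β → γ} (hf : Measurable f) :
    (μ ⊗ₘ κ).map (Prod.map id f) = μ ⊗ₘ (κ.map f) := by
  ext s hs
  rw [Measure.map_apply (measurable_id.prodMap hf) hs, Measure.compProd_apply
    (measurable_id.prodMap hf hs), Measure.compProd_apply hs]
  refine lintegral_congr fun a => ?_
  rw [Kernel.map_apply' κ hf a (measurable_prodMk_left hs)]
  rfl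


/-- The key per-fiber lemma: a probability measure on `ℝ × ℝ` supported on a
strictly-monotone-compatible relation with uniform first marginal. -/
lemma core (m : Measure (ℝ × ℝ)) [IsProbabilityMeasure m] (s : Set (ℝ × ℝ))
    (hsm : MeasurableSet s) (hs1 : m s = 1)
    (hgood : ∀ p ∈ s, ∀ q ∈ s, ¬ bad p q)
    (hunary : ∀ p ∈ s, p.1 ∈ Ioo (0:ℝ) 1 ∧ 0 ≤ p.2)
    (hfst : m.map Prod.fst = volume.restrict (Ioo (0:ℝ) 1)) :
    ∀ᵐ p ∂m, (0 < p.2 → (m {q | q.2 ≤ p.2} = ENNReal.ofReal p.1 ∧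
        (m {q | q.2 ≤ 0}).toReal < p.1)) ∧
      ((m {q | q.2 ≤ 0}).toReal < p.1 → 0 < p.2) := by
  have hscompl : m sᶜ = 0 := by
    have := measure_compl hsm (measure_ne_top m s)
    rw [hs1, measure_univ, tsub_self] at this
    exact this
  have hs_ae : ∀ᵐ p ∂m, p ∈ s := by
    rw [ae_iff]
    exact hscompl
  have hfull : ∀ X : Set (ℝ × ℝ), m (X ∩ s) = m X := by
    intro X
    apply measure_congr
    rw [Filter.eventuallyEq_set]
    filter_upwards [hs_ae] with p hp
    simp [hp]
  have hatom : ∀ t₀ : ℝ, m {p : ℝ × ℝ | p.1 = t₀} = 0 := by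
    intro t₀
    have h1 : {p : ℝ × ℝ | p.1 = t₀} = Prod.fst ⁻¹' {t₀} := rfl
    rw [h1, ← Measure.map_apply measurable_fst (measurableSet_singleton t₀), hfst,
      Measure.restrict_apply (measurableSet_singleton t₀)]
    exact measure_mono_null inter_subset_left (measure_singleton t₀)
  have hIio : ∀ t₀ : ℝ, 0 < t₀ → t₀ ≤ 1 → m {p : ℝ × ℝ | p.1 < t₀} = ENNReal.ofReal t₀ := by
    intro t₀ h0 h1
    have heq : {p : ℝ × ℝ | p.1 < t₀} = Prod.fst ⁻¹' (Iio t₀) := rfl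
    rw [heq, ← Measure.map_apply measurable_fst measurableSet_Iio, hfst,
      Measure.restrict_apply measurableSet_Iio]
    have : Iio t₀ ∩ Ioo (0:ℝ) 1 = Ioo 0 t₀ := by
      ext x
      simp only [mem_inter_iff, mem_Iio, mem_Ioo]
      constructor
      · rintro ⟨ha, hb, _⟩; exact ⟨hb, ha⟩
      · rintro ⟨ha, hb⟩; exact ⟨hb, ha, lt_of_lt_of_le hb h1⟩
    rw [this, Real.volume_Ioo, sub_zero]
  have hIic : ∀ t₀ : ℝ, 0 < t₀ → t₀ ≤ 1 → m {p : ℝ × ℝ | p.1 ≤ t₀} = ENNReal.ofReal t₀ := by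
    intro t₀ h0 h1
    have hsplit : {p : ℝ × ℝ | p.1 ≤ t₀} = {p : ℝ × ℝ | p.1 < t₀} ∪ {p : ℝ × ℝ | p.1 = t₀} := by
      ext p; simp only [mem_setOf_eq, mem_union]; exact le_iff_lt_or_eq
    rw [hsplit]
    refine le_antisymm ?_ ?_
    · calc m ({p : ℝ × ℝ | p.1 < t₀} ∪ {p : ℝ × ℝ | p.1 = t₀})
          ≤ m {p : ℝ × ℝ | p.1 < t₀} + m {p : ℝ × ℝ | p.1 = t₀} := measure_union_le _ _
        _ = ENNReal.ofReal t₀ := by rw [hIio t₀ h0 h1, hatom, add_zero]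
    · rw [← hIio t₀ h0 h1]
      exact measure_mono subset_union_left
  set az := (m {q : ℝ × ℝ | q.2 ≤ 0}).toReal with haz
  have haznull : ∀ᵐ p ∂m, p.1 ≠ az := by
    rw [ae_iff]
    have : {p : ℝ × ℝ | ¬ p.1 ≠ az} = {p : ℝ × ℝ | p.1 = az} := by ext p; simp
    rw [this]
    exact hatom az
  filter_upwards [hs_ae, haznull] with p hp hpne
  have hp1 := (hunary p hp).1
  constructor
  · intro hpos
    constructor
    · -- m {q | q.2 ≤ p.2} = ofReal p.1
      refine le_antisymm ?_ ?_
      · rw [← hfull {q : ℝ × ℝ | q.2 ≤ p.2}]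
        refine le_trans (measure_mono ?_) (le_of_eq (hIic p.1 hp1.1 hp1.2.le))
        rintro q ⟨hq2, hqs⟩
        simp only [mem_setOf_eq] at hq2 ⊢
        by_contra hgt
        push_neg at hgt
        rcases lt_or_eq_of_le hq2 with hlt | heq
        · exact hgood p hp q hqs (Or.inl ⟨hgt, Or.inl hlt⟩)
        · exact hgood p hp q hqs (Or.inl ⟨hgt, Or.inr ⟨heq ▸ hpos, hq2⟩⟩)
      · rw [← hIio p.1 hp1.1 hp1.2.le, ← hfull {q : ℝ × ℝ | q.1 < p.1}]
        refine measure_mono ?_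
        rintro q ⟨hq1, hqs⟩
        simp only [mem_setOf_eq] at hq1 ⊢
        by_contra hgt
        push_neg at hgt
        exact hgood q hqs p hp (Or.inl ⟨hq1, Or.inl hgt⟩)
    · -- az < p.1
      have hle : m {q : ℝ × ℝ | q.2 ≤ 0} ≤ ENNReal.ofReal p.1 := by
        rw [← hfull {q : ℝ × ℝ | q.2 ≤ 0}]
        refine le_trans (measure_mono ?_) (le_of_eq (hIic p.1 hp1.1 hp1.2.le))
        rintro q ⟨hq2, hqs⟩
        simp only [mem_setOf_eq] at hq2 ⊢
        by_contra hgt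
        push_neg at hgt
        exact hgood p hp q hqs (Or.inl ⟨hgt, Or.inl (lt_of_le_of_lt hq2 hpos)⟩)
      have : az ≤ p.1 := by
        have := ENNReal.toReal_mono ENNReal.ofReal_ne_top hle
        rwa [ENNReal.toReal_ofReal hp1.1.le] at this
      exact lt_of_le_of_ne this hpne.symm
  · intro hazlt
    by_contra hnpos
    push_neg at hnpos
    -- p.2 ≤ 0, show p.1 ≤ az, contradiction
    have hle : ENNReal.ofReal p.1 ≤ m {q : ℝ × ℝ | q.2 ≤ 0} := by
      rw [← hIio p.1 hp1.1 hp1.2.le, ← hfull {q : ℝ × ℝ | q.1 < p.1}]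
      refine measure_mono ?_
      rintro q ⟨hq1, hqs⟩
      simp only [mem_setOf_eq] at hq1 ⊢
      by_contra hgt
      push_neg at hgt
      exact hgood q hqs p hp (Or.inl ⟨hq1, Or.inl (lt_of_le_of_lt hnpos hgt)⟩)
    have : p.1 ≤ az := by
      have h2 := ENNReal.toReal_mono (measure_ne_top m _) hle
      rwa [ENNReal.toReal_ofReal hp1.1.le] at h2
    exact absurd hazlt (not_lt.mpr this)


end CFaux

open CFaux in
set_option maxHeartbeats 1000000 in
theorem control_function_existence
    {dz de : ℕ} {Ω : Type} [MeasurableSpace Ω] [StandardBorelSpace Ω] [Nonempty Ω]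
    (μ : Measure Ω) [IsProbabilityMeasure μ]
    (Z : Ω → Fin dz → ℝ) (ε : Ω → Fin de → ℝ) (η : Ω → ℝ) (C : Ω → ℝ) (V : Ω → ℝ)
    (h : (Fin dz → ℝ) → ℝ → ℝ)
    (hZ : Measurable Z) (hε : Measurable ε) (hη : Measurable η) (hC : Measurable C)
    (hV : Measurable V)
    -- Assumption CV: (ε, η) ⊥⊥ Z
    (hindep : IndepFun (fun ω => (ε ω, η ω)) Z μ)
    -- η is continuously distributed, normalized to be uniform on (0,1)
    (hunif : μ.map η = volume.restrict (Set.Ioo (0 : ℝ) 1))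
    -- t ↦ h(z, t) is strictly increasing a.s.
    (hmono : ∀ᵐ ω ∂μ, StrictMono (h (Z ω)))
    -- censored selection rule: C = max(h(Z, η), 0)
    (hCdef : ∀ ω, C ω = max (h (Z ω) (η ω)) 0)
    -- control function: V = F_C(C | Z), the conditional CDF of C given Z evaluated at (C, Z)
    (hVdef : ∀ ω, V ω = condCDF (μ.map fun ω' => (Z ω', C ω')) (Z ω) (C ω))
    -- the selected population has positive probability
    (hsel : μ {ω | 0 < C ω} ≠ 0) :
    -- ε ⊥⊥ Z | V, conditionally on the selected population {C > 0}
    CondIndepFun (MeasurableSpace.comap V inferInstance) hV.comap_le ε Z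
      (μ[|{ω | 0 < C ω}]) := by
  classical
  have hSmeas : MeasurableSet {ω | 0 < C ω} := measurableSet_lt measurable_const hC
  set unif : Measure ℝ := volume.restrict (Set.Ioo (0:ℝ) 1) with hunifdef
  haveI hunifprob : IsProbabilityMeasure unif :=
    ⟨by rw [Measure.restrict_apply_univ, Real.volume_Ioo]; norm_num⟩
  -- η is in (0,1) a.e.
  have hηIoo : ∀ᵐ ω ∂μ, η ω ∈ Set.Ioo (0:ℝ) 1 := by
    rw [ae_iff]
    have heq : {ω | ¬ η ω ∈ Set.Ioo (0:ℝ) 1} = η ⁻¹' (Set.Ioo (0:ℝ) 1)ᶜ := rfl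
    rw [heq, ← Measure.map_apply hη measurableSet_Ioo.compl, hunif,
      Measure.restrict_apply measurableSet_Ioo.compl]
    simp
  -- the measurable null set M of bad points
  obtain ⟨M, hMsub, hMmeas, hMnull⟩ := exists_measurable_superset_of_null
    (s := {ω | ¬ (StrictMono (h (Z ω)) ∧ η ω ∈ Set.Ioo (0:ℝ) 1)})
    (by rw [← ae_iff]; exact hmono.and hηIoo)
  have hMgood : ∀ ω ∉ M, StrictMono (h (Z ω)) ∧ η ω ∈ Set.Ioo (0:ℝ) 1 := by
    intro ω hω
    by_contra hcon
    exact hω (hMsub hcon)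
  have hMae : ∀ᵐ ω ∂μ, ω ∉ M := by
    rw [ae_iff]
    simpa using hMnull
  -- the Borel relation D
  obtain ⟨D, hDmeas, hDmem, hDgood, hDunary⟩ :=
    exists_graph Z η C h hZ hη hC M hMmeas hMgood hCdef
  -- measures and kernels
  set W : Ω → (Fin dz → ℝ) × (ℝ × ℝ) := fun ω => (Z ω, (η ω, C ω)) with hWdef
  have hWmeas : Measurable W := hZ.prodMk (hη.prodMk hC)
  set σm : Measure ((Fin dz → ℝ) × (ℝ × ℝ)) := μ.map W with hσdef
  haveI : IsProbabilityMeasure σm := Measure.isProbabilityMeasure_map hWmeas.aemeasurable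
  set Q : Measure (Fin dz → ℝ) := μ.map Z with hQdef
  haveI : IsProbabilityMeasure Q := Measure.isProbabilityMeasure_map hZ.aemeasurable
  have hfstσ : σm.fst = Q := Measure.fst_map_prodMk (hη.prodMk hC)
  set κ : Kernel (Fin dz → ℝ) (ℝ × ℝ) := σm.condKernel with hκdef
  have hdis : Q ⊗ₘ κ = σm := by
    rw [← hfstσ]
    exact σm.disintegrate κ
  -- Fact 0 : κ z lives on the section of D, a.e. z
  have hD1 : ∀ᵐ z ∂Q, ∀ᵐ p ∂(κ z), (z, p) ∈ D := by
    refine Measure.ae_ae_of_ae_compProd ?_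
    rw [hdis]
    have hDae : ∀ᵐ x ∂σm, x ∈ D := by
      rw [ae_iff, hσdef, Measure.map_apply hWmeas]
      · refine measure_mono_null ?_ hMnull
        intro ω hω
        by_contra hωM
        exact hω (hDmem ω hωM)
      · exact hDmeas.compl
    exact hDae
  -- Fact 1 : the first marginal of κ z is uniform, a.e. z
  have hZη : μ.map (fun ω => (Z ω, η ω)) = Q.prod unif := by
    have h1 : IndepFun η Z μ := by
      have := hindep.comp measurable_snd measurable_id
      exact this
    have h2 := (indepFun_iff_map_prod_eq_prod_map_map hZ.aemeasurable hη.aemeasurable).mp h1.symm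
    rw [h2, hunif]
  have hcompfst : Q ⊗ₘ (κ.map Prod.fst) = Q.prod unif := by
    rw [← compProd_map_right Q κ measurable_fst, hdis, hσdef,
      Measure.map_map (measurable_id.prodMap measurable_fst) hWmeas]
    exact hZη
  haveI : IsMarkovKernel (κ.map Prod.fst) := Kernel.IsMarkovKernel.map κ measurable_fst
  have hκfst : ∀ᵐ z ∂Q, (κ z).map Prod.fst = unif := by
    have hfstQ : (Q.prod unif).fst = Q := Measure.fst_prod
    have hu1 := eq_condKernel_of_measure_eq_compProd (ρ := Q.prod unif) (κ.map Prod.fst)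
      (by rw [hfstQ]; exact hcompfst.symm)
    have hu2 := eq_condKernel_of_measure_eq_compProd (ρ := Q.prod unif)
      (Kernel.const _ unif) (by rw [hfstQ, Measure.compProd_const])
    rw [hfstQ] at hu1 hu2
    filter_upwards [hu1, hu2] with z h1 h2
    rw [← Kernel.map_apply κ measurable_fst, h1, ← h2, Kernel.const_apply]
  -- the measure ρC = law (Z, C) and its disintegration
  set ρC : Measure ((Fin dz → ℝ) × ℝ) := μ.map (fun ω => (Z ω, C ω)) with hρCdef
  haveI : IsProbabilityMeasure ρC := Measure.isProbabilityMeasure_map (hZ.prodMk hC).aemeasurable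
  set κ2 : Kernel (Fin dz → ℝ) ℝ := κ.map Prod.snd with hκ2def
  haveI : IsMarkovKernel κ2 := Kernel.IsMarkovKernel.map κ measurable_snd
  have hρCeq : ρC = Q ⊗ₘ κ2 := by
    rw [hκ2def, ← compProd_map_right Q κ measurable_snd, hdis, hσdef,
      Measure.map_map (measurable_id.prodMap measurable_snd) hWmeas]
    rfl
  have hρfst : ρC.fst = Q := Measure.fst_map_prodMk hC
  -- identification of condCDF with the kernel CDF at rationals
  have hcdf : ∀ r : ℚ, ∀ᵐ z ∂Q,
      ENNReal.ofReal (condCDF ρC z (r:ℝ)) = κ2 z (Iic (r:ℝ)) := by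
    intro r
    refine ae_eq_of_forall_setLIntegral_eq_of_sigmaFinite
      ((measurable_condCDF ρC (r:ℝ)).ennreal_ofReal)
      (Kernel.measurable_coe κ2 measurableSet_Iic) ?_
    intro s hs _
    have h1 : ∫⁻ z in s, ENNReal.ofReal (condCDF ρC z (r:ℝ)) ∂Q = ρC (s ×ˢ Iic (r:ℝ)) := by
      rw [← hρfst]
      exact setLIntegral_condCDF ρC (r:ℝ) hs
    rw [h1, hρCeq, Measure.compProd_apply_prod hs measurableSet_Iic]
  have hκ2sec : ∀ z c, κ2 z (Iic c) = κ z {p : ℝ × ℝ | p.2 ≤ c} := by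
    intro z c
    rw [hκ2def, Kernel.map_apply' κ measurable_snd z measurableSet_Iic]
    rfl
  -- a.e. identification of V
  have hV2 : ∀ᵐ ω ∂μ, ENNReal.ofReal (V ω) = κ2 (Z ω) (Iic (C ω)) := by
    have hQcdf : ∀ᵐ z ∂Q, ∀ r : ℚ, ENNReal.ofReal (condCDF ρC z (r:ℝ)) = κ2 z (Iic (r:ℝ)) :=
      ae_all_iff.mpr hcdf
    have hmeaspred : MeasurableSet {z : Fin dz → ℝ |
        ∀ r : ℚ, ENNReal.ofReal (condCDF ρC z (r:ℝ)) = κ2 z (Iic (r:ℝ))} := by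
      have : {z : Fin dz → ℝ | ∀ r : ℚ, ENNReal.ofReal (condCDF ρC z (r:ℝ)) = κ2 z (Iic (r:ℝ))}
          = ⋂ r : ℚ, ({z | ENNReal.ofReal (condCDF ρC z (r:ℝ)) ≤ κ2 z (Iic (r:ℝ))} ∩
            {z | κ2 z (Iic (r:ℝ)) ≤ ENNReal.ofReal (condCDF ρC z (r:ℝ))}) := by
        ext z
        simp only [mem_setOf_eq, mem_iInter, mem_inter_iff]
        exact forall_congr' fun r => le_antisymm_iff
      rw [this]
      refine MeasurableSet.iInter fun r => MeasurableSet.inter ?_ ?_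
      · exact measurableSet_le ((measurable_condCDF ρC (r:ℝ)).ennreal_ofReal)
          (Kernel.measurable_coe κ2 measurableSet_Iic)
      · exact measurableSet_le (Kernel.measurable_coe κ2 measurableSet_Iic)
          ((measurable_condCDF ρC (r:ℝ)).ennreal_ofReal)
    have hμcdf : ∀ᵐ ω ∂μ, ∀ r : ℚ,
        ENNReal.ofReal (condCDF ρC (Z ω) (r:ℝ)) = κ2 (Z ω) (Iic (r:ℝ)) := by
      rw [← ae_map_iff hZ.aemeasurable hmeaspred]
      exact hQcdf
    filter_upwards [hμcdf] with ω hω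
    rw [hVdef ω]
    exact stieltjes_eq (condCDF ρC (Z ω)) (κ2 (Z ω)) (condCDF_nonneg ρC (Z ω)) hω (C ω)
  -- the threshold function a
  set a : (Fin dz → ℝ) → ℝ := fun z => (κ z {p : ℝ × ℝ | p.2 ≤ 0}).toReal with hadef
  have hameas : Measurable a :=
    (Kernel.measurable_coe κ (measurableSet_le measurable_snd measurable_const)).ennreal_toReal
  -- the good event G
  set Gs : Set ((Fin dz → ℝ) × (ℝ × ℝ)) :=
    {x | (0 < x.2.2 → (κ x.1 {p : ℝ × ℝ | p.2 ≤ x.2.2} = ENNReal.ofReal x.2.1 ∧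
        a x.1 < x.2.1)) ∧ (a x.1 < x.2.1 → 0 < x.2.2)} with hGsdef
  have hGsmeas : MeasurableSet Gs := by
    have hf1 : Measurable (fun x : (Fin dz → ℝ) × (ℝ × ℝ) => κ x.1 {p : ℝ × ℝ | p.2 ≤ x.2.2}) :=
      (measurable_phi κ).comp (measurable_fst.prodMk measurable_snd.snd)
    have hf2 : Measurable (fun x : (Fin dz → ℝ) × (ℝ × ℝ) => ENNReal.ofReal x.2.1) :=
      measurable_snd.fst.ennreal_ofReal
    have hS1 : MeasurableSet {x : (Fin dz → ℝ) × (ℝ × ℝ) | 0 < x.2.2} :=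
      measurableSet_lt measurable_const measurable_snd.snd
    have hS2 : MeasurableSet {x : (Fin dz → ℝ) × (ℝ × ℝ) |
        κ x.1 {p : ℝ × ℝ | p.2 ≤ x.2.2} = ENNReal.ofReal x.2.1} := by
      have : {x : (Fin dz → ℝ) × (ℝ × ℝ) |
          κ x.1 {p : ℝ × ℝ | p.2 ≤ x.2.2} = ENNReal.ofReal x.2.1} =
          {x | κ x.1 {p : ℝ × ℝ | p.2 ≤ x.2.2} ≤ ENNReal.ofReal x.2.1} ∩
          {x | ENNReal.ofReal x.2.1 ≤ κ x.1 {p : ℝ × ℝ | p.2 ≤ x.2.2}} := by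
        ext x; simp only [mem_setOf_eq, mem_inter_iff]; exact le_antisymm_iff
      rw [this]
      exact (measurableSet_le hf1 hf2).inter (measurableSet_le hf2 hf1)
    have hS3 : MeasurableSet {x : (Fin dz → ℝ) × (ℝ × ℝ) | a x.1 < x.2.1} :=
      measurableSet_lt (hameas.comp measurable_fst) measurable_snd.fst
    have : Gs = ((compl {x : (Fin dz → ℝ) × (ℝ × ℝ) | 0 < x.2.2}) ∪
        ({x : (Fin dz → ℝ) × (ℝ × ℝ) |
          κ x.1 {p : ℝ × ℝ | p.2 ≤ x.2.2} = ENNReal.ofReal x.2.1} ∩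
         {x : (Fin dz → ℝ) × (ℝ × ℝ) | a x.1 < x.2.1})) ∩
        ((compl {x : (Fin dz → ℝ) × (ℝ × ℝ) | a x.1 < x.2.1}) ∪
         {x : (Fin dz → ℝ) × (ℝ × ℝ) | 0 < x.2.2}) := by
      ext x
      simp only [hGsdef, mem_setOf_eq, mem_inter_iff, mem_union, mem_compl_iff]
      constructor
      · rintro ⟨h1, h2⟩
        constructor
        · by_cases hx : 0 < x.2.2
          · exact Or.inr (h1 hx)
          · exact Or.inl hx
        · by_cases hx : a x.1 < x.2.1
          · exact Or.inr (h2 hx)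
          · exact Or.inl hx
      · rintro ⟨h1, h2⟩
        constructor
        · intro hx
          rcases h1 with h1 | h1
          · exact absurd hx h1
          · exact h1
        · intro hx
          rcases h2 with h2 | h2
          · exact absurd hx h2
          · exact h2
    rw [this]
    exact ((hS1.compl.union (hS2.inter hS3))).inter (hS3.compl.union hS1)
  -- κ z lives on the section of Gs, a.e. z
  have hGcore : ∀ᵐ z ∂Q, ∀ᵐ p ∂(κ z), (z, p) ∈ Gs := by
    filter_upwards [hD1, hκfst] with z h1 h2
    have hsecmeas : MeasurableSet (Prod.mk z ⁻¹' D) := measurable_prodMk_left hDmeas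
    have hsec1 : κ z (Prod.mk z ⁻¹' D) = 1 := by
      have hcompl : κ z ((Prod.mk z ⁻¹' D)ᶜ) = 0 := by
        rw [ae_iff] at h1
        exact h1
      have := measure_compl hsecmeas (measure_ne_top (κ z) _)
      rw [hcompl, measure_univ] at this
      have h4 : κ z (Prod.mk z ⁻¹' D) ≤ 1 := prob_le_one
      rcases eq_or_lt_of_le h4 with heq | hlt
      · exact heq
      · exfalso
        rw [eq_comm, tsub_eq_zero_iff_le] at this
        exact absurd this (not_le.mpr hlt)
    have := core (κ z) (Prod.mk z ⁻¹' D) hsecmeas hsec1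
      (fun p hp q hq => hDgood (z, p) hp (z, q) hq rfl)
      (fun p hp => hDunary (z, p) hp) h2
    filter_upwards [this] with p hp
    exact hp
  have hGμ : ∀ᵐ ω ∂μ, W ω ∈ Gs := by
    have hσG : ∀ᵐ x ∂σm, x ∈ Gs := by
      rw [← hdis]
      exact Measure.ae_compProd_of_ae_ae hGsmeas hGcore
    rw [hσdef] at hσG
    exact (ae_map_iff hWmeas.aemeasurable hGsmeas).mp hσG
  -- the two key facts F1 and F2
  have F1 : ∀ᵐ ω ∂μ, 0 < C ω → V ω = η ω := by
    filter_upwards [hGμ, hV2, hηIoo] with ω hG hVω hηω hpos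
    have h1 : κ (Z ω) {p : ℝ × ℝ | p.2 ≤ C ω} = ENNReal.ofReal (η ω) := (hG.1 hpos).1
    have h2 : ENNReal.ofReal (V ω) = ENNReal.ofReal (η ω) := by
      rw [hVω, hκ2sec, h1]
    have hV0 : 0 ≤ V ω := by rw [hVdef ω]; exact condCDF_nonneg _ _ _
    exact (ENNReal.ofReal_eq_ofReal_iff hV0 hηω.1.le).mp h2
  have F2 : ∀ᵐ ω ∂μ, (0 < C ω ↔ a (Z ω) < η ω) := by
    filter_upwards [hGμ] with ω hG
    exact ⟨fun hpos => (hG.1 hpos).2, hG.2⟩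
  -- ### PART III : the conditional probability given η, and the main integral identity
  set ν : Measure (ℝ × (Fin de → ℝ)) := μ.map (fun ω => (η ω, ε ω)) with hνdef
  haveI : IsProbabilityMeasure ν := Measure.isProbabilityMeasure_map (hη.prodMk hε).aemeasurable
  have hνfst : ν.fst = unif := by rw [hνdef, Measure.fst_map_prodMk hε, hunif]
  set νP : Measure ((Fin de → ℝ) × ℝ) := μ.map (fun ω => (ε ω, η ω)) with hνPdef
  haveI : IsProbabilityMeasure νP := Measure.isProbabilityMeasure_map (hε.prodMk hη).aemeasurable
  have hP2 : μ.map (fun ω => (Z ω, (ε ω, η ω))) = Q.prod νP :=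
    (indepFun_iff_map_prod_eq_prod_map_map hZ.aemeasurable
      (hε.prodMk hη).aemeasurable).mp hindep.symm
  have hνPsnd : νP.map Prod.snd = unif := by
    rw [hνPdef, Measure.map_map measurable_snd (hε.prodMk hη)]
    exact hunif
  have hIDw : ∀ s' : Set (Fin de → ℝ), MeasurableSet s' → ∀ w : Set ℝ, MeasurableSet w →
      νP (s' ×ˢ w) = ∫⁻ x in w, ν.condKernel x s' ∂unif := by
    intro s' hs' w hw
    have h1 : νP (s' ×ˢ w) = μ (ε ⁻¹' s' ∩ η ⁻¹' w) := by
      rw [hνPdef, Measure.map_apply (hε.prodMk hη) (hs'.prod hw)]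
      rfl
    have h2 : ν (w ×ˢ s') = μ (ε ⁻¹' s' ∩ η ⁻¹' w) := by
      rw [hνdef, Measure.map_apply (hη.prodMk hε) (hw.prod hs')]
      congr 1
      ext ω
      simp only [mem_preimage, mem_prod, mem_inter_iff]
      tauto
    rw [h1, ← h2]
    conv_lhs => rw [← ν.disintegrate ν.condKernel]
    rw [Measure.compProd_apply_prod hw hs', hνfst]
  -- ### PART IV : conclusion
  haveI hμ'prob : IsProbabilityMeasure (μ[|{ω | 0 < C ω}]) := cond_isProbabilityMeasure hsel
  rw [condIndepFun_iff_condExp_inter_preimage_eq_mul hε hZ]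
  intro s t hs ht
  -- the conditional probability of `ε ∈ s` given `η`
  set β : ℝ → ℝ := fun x => (ν.condKernel x s).toReal with hβdef
  have hβmeas : Measurable β := (Kernel.measurable_coe _ hs).ennreal_toReal
  have hβ0 : ∀ x, 0 ≤ β x := fun x => ENNReal.toReal_nonneg
  have hβ1 : ∀ x, β x ≤ 1 := by
    intro x
    have h1 : ν.condKernel x s ≤ 1 := prob_le_one
    have := ENNReal.toReal_mono ENNReal.one_ne_top h1
    simpa using this
  have hofβ : ∀ x, ENNReal.ofReal (β x) = ν.condKernel x s :=
    fun x => ENNReal.ofReal_toReal (measure_ne_top _ _)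
  -- the main identity under μ
  have IDμ : ∀ u : Set ℝ, MeasurableSet u → ∀ t' : Set (Fin dz → ℝ), MeasurableSet t' →
      μ ({ω | 0 < C ω} ∩ (ε ⁻¹' s ∩ (V ⁻¹' u ∩ Z ⁻¹' t'))) =
        ∫⁻ ω in {ω | 0 < C ω} ∩ (V ⁻¹' u ∩ Z ⁻¹' t'), ENNReal.ofReal (β (V ω)) ∂μ := by
    intro u hu t' ht'
    have hset : μ ({ω | 0 < C ω} ∩ (ε ⁻¹' s ∩ (V ⁻¹' u ∩ Z ⁻¹' t'))) =
        μ ({ω | a (Z ω) < η ω} ∩ (ε ⁻¹' s ∩ (η ⁻¹' u ∩ Z ⁻¹' t'))) := by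
      apply measure_congr
      rw [Filter.eventuallyEq_set]
      filter_upwards [F1, F2] with ω h1 h2
      simp only [mem_inter_iff, mem_setOf_eq, mem_preimage]
      constructor
      · rintro ⟨hS, hεm, hVu, hZt⟩
        exact ⟨h2.mp hS, hεm, by rwa [← h1 hS], hZt⟩
      · rintro ⟨hS, hεm, hηu, hZt⟩
        have hS' : 0 < C ω := h2.mpr hS
        exact ⟨hS', hεm, by rwa [h1 hS'], hZt⟩
    have hTmeas : MeasurableSet ({ω | a (Z ω) < η ω} ∩ (η ⁻¹' u ∩ Z ⁻¹' t')) :=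
      (measurableSet_lt (hameas.comp hZ) hη).inter ((hη hu).inter (hZ ht'))
    have hLmeas : MeasurableSet ({ω | 0 < C ω} ∩ (V ⁻¹' u ∩ Z ⁻¹' t')) :=
      hSmeas.inter ((hV hu).inter (hZ ht'))
    have hint : ∫⁻ ω in {ω | 0 < C ω} ∩ (V ⁻¹' u ∩ Z ⁻¹' t'), ENNReal.ofReal (β (V ω)) ∂μ =
        ∫⁻ ω in {ω | a (Z ω) < η ω} ∩ (η ⁻¹' u ∩ Z ⁻¹' t'), ENNReal.ofReal (β (η ω)) ∂μ := by
      rw [← lintegral_indicator hLmeas, ← lintegral_indicator hTmeas]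
      refine lintegral_congr_ae ?_
      filter_upwards [F1, F2] with ω h1 h2
      simp only [Set.indicator_apply, mem_inter_iff, mem_setOf_eq, mem_preimage]
      by_cases hS : 0 < C ω
      · rw [h1 hS]
        simp only [h2]
      · have hS2 : ¬ a (Z ω) < η ω := fun hc => hS (h2.mpr hc)
        rw [if_neg (by tauto), if_neg (by tauto)]
    rw [hset, hint]
    -- push the identity to the product space
    set R : Ω → (Fin dz → ℝ) × ((Fin de → ℝ) × ℝ) := fun ω => (Z ω, (ε ω, η ω)) with hRdef
    have hRmeas : Measurable R := hZ.prodMk (hε.prodMk hη)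
    set Bset : Set ((Fin dz → ℝ) × ((Fin de → ℝ) × ℝ)) :=
      {x | (a x.1 < x.2.2 ∧ x.2.2 ∈ u ∧ x.1 ∈ t') ∧ x.2.1 ∈ s} with hBdef
    have hcondmem : MeasurableSet {y : (Fin dz → ℝ) × ((Fin de → ℝ) × ℝ) |
        a y.1 < y.2.2 ∧ y.2.2 ∈ u ∧ y.1 ∈ t'} := by
      refine ((measurableSet_lt (hameas.comp measurable_fst) measurable_snd.snd).inter
        (MeasurableSet.inter ?_ ?_))
      · exact measurable_snd.snd hu
      · exact measurable_fst ht'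
    have hBmeas : MeasurableSet Bset := by
      have : Bset = {y : (Fin dz → ℝ) × ((Fin de → ℝ) × ℝ) |
          a y.1 < y.2.2 ∧ y.2.2 ∈ u ∧ y.1 ∈ t'} ∩ {y | y.2.1 ∈ s} := rfl
      rw [this]
      exact hcondmem.inter (measurable_snd.fst hs)
    set g : (Fin dz → ℝ) × ((Fin de → ℝ) × ℝ) → ℝ≥0∞ :=
      fun x => Set.indicator {y : (Fin dz → ℝ) × ((Fin de → ℝ) × ℝ) |
        a y.1 < y.2.2 ∧ y.2.2 ∈ u ∧ y.1 ∈ t'} (fun y => ν.condKernel y.2.2 s) x with hgdef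
    have hgmeas : Measurable g :=
      Measurable.indicator ((Kernel.measurable_coe _ hs).comp measurable_snd.snd) hcondmem
    have hLHS : μ ({ω | a (Z ω) < η ω} ∩ (ε ⁻¹' s ∩ (η ⁻¹' u ∩ Z ⁻¹' t'))) =
        ∫⁻ z, νP (Prod.mk z ⁻¹' Bset) ∂Q := by
      have h1 : {ω | a (Z ω) < η ω} ∩ (ε ⁻¹' s ∩ (η ⁻¹' u ∩ Z ⁻¹' t')) = R ⁻¹' Bset := by
        ext ω
        simp only [mem_inter_iff, mem_setOf_eq, mem_preimage, hBdef, hRdef]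
        tauto
      rw [h1, ← Measure.map_apply hRmeas hBmeas, hP2, Measure.prod_apply hBmeas]
    have hRHS : ∫⁻ ω in {ω | a (Z ω) < η ω} ∩ (η ⁻¹' u ∩ Z ⁻¹' t'),
        ENNReal.ofReal (β (η ω)) ∂μ = ∫⁻ z, ∫⁻ p, g (z, p) ∂νP ∂Q := by
      rw [← lintegral_indicator hTmeas]
      have h1 : ∀ ω, ({ω | a (Z ω) < η ω} ∩ (η ⁻¹' u ∩ Z ⁻¹' t')).indicator
          (fun ω => ENNReal.ofReal (β (η ω))) ω = g (R ω) := by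
        intro ω
        rw [hgdef]
        simp only [Set.indicator_apply, mem_inter_iff, mem_setOf_eq, mem_preimage, hRdef]
        rw [hofβ]
      simp_rw [h1]
      rw [← lintegral_map hgmeas hRmeas, hP2, lintegral_prod g hgmeas.aemeasurable]
    rw [hLHS, hRHS]
    refine lintegral_congr fun z => ?_
    by_cases hz : z ∈ t'
    · have hsec : Prod.mk z ⁻¹' Bset = s ×ˢ (u ∩ Ioi (a z)) := by
        ext p
        simp only [mem_preimage, hBdef, mem_setOf_eq, mem_prod, mem_inter_iff, mem_Ioi, hz,
          and_true]
        tauto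
      have hgz : ∀ p : (Fin de → ℝ) × ℝ, g (z, p) =
          Set.indicator (u ∩ Ioi (a z)) (fun x => ν.condKernel x s) p.2 := by
        intro p
        rw [hgdef]
        simp only [Set.indicator_apply, mem_setOf_eq, mem_inter_iff, mem_Ioi, hz, and_true]
        exact if_congr (by tauto) rfl rfl
      rw [hsec, hIDw s hs (u ∩ Ioi (a z)) (hu.inter measurableSet_Ioi)]
      simp_rw [hgz]
      rw [← lintegral_map (Measurable.indicator (Kernel.measurable_coe _ hs)
        (hu.inter measurableSet_Ioi)) measurable_snd, hνPsnd,
        lintegral_indicator (hu.inter measurableSet_Ioi)]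
    · have hsec : Prod.mk z ⁻¹' Bset = ∅ := by
        ext p
        simp only [mem_preimage, hBdef, mem_setOf_eq, mem_empty_iff_false, iff_false, not_and,
          and_imp]
        intro _ _ hz'
        exact absurd hz' hz
      have hgz : ∀ p : (Fin de → ℝ) × ℝ, g (z, p) = 0 := by
        intro p
        rw [hgdef]
        refine Set.indicator_of_notMem ?_ _
        simp only [mem_setOf_eq, not_and]
        intro _ _
        exact hz
      simp_rw [hsec, hgz]
      simp
  -- the identity under the conditional measure μ'
  have hcondeq : μ[|{ω | 0 < C ω}] =
      (μ {ω | 0 < C ω})⁻¹ • μ.restrict {ω | 0 < C ω} := rfl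
  have IDμ' : ∀ u : Set ℝ, MeasurableSet u → ∀ t' : Set (Fin dz → ℝ), MeasurableSet t' →
      μ[|{ω | 0 < C ω}] (ε ⁻¹' s ∩ (V ⁻¹' u ∩ Z ⁻¹' t')) =
        ∫⁻ ω in V ⁻¹' u ∩ Z ⁻¹' t', ENNReal.ofReal (β (V ω)) ∂(μ[|{ω | 0 < C ω}]) := by
    intro u hu t' ht'
    rw [cond_apply hSmeas]
    have hYmeas : MeasurableSet (V ⁻¹' u ∩ Z ⁻¹' t') := (hV hu).inter (hZ ht')
    rw [hcondeq, Measure.restrict_smul, lintegral_smul_measure,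
      Measure.restrict_restrict hYmeas]
    congr 1
    rw [inter_comm (V ⁻¹' u ∩ Z ⁻¹' t')]
    exact IDμ u hu t' ht'
  -- conditional expectation arguments
  set μ' := μ[|{ω | 0 < C ω}] with hμ'def
  have hle := hV.comap_le
  haveI : SigmaFinite (μ'.trim hle) := by infer_instance
  have hVmV : Measurable[MeasurableSpace.comap V inferInstance] V := Measurable.of_comap_le le_rfl
  have hβVsm : StronglyMeasurable[MeasurableSpace.comap V inferInstance] (fun ω => β (V ω)) :=
    (hβmeas.comp hVmV).stronglyMeasurable
  have hβVint : Integrable (fun ω => β (V ω)) μ' := by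
    refine Integrable.mono' (integrable_const (1:ℝ))
      ((hβmeas.comp hV).aestronglyMeasurable) (ae_of_all _ fun ω => ?_)
    rw [Real.norm_eq_abs, abs_of_nonneg (hβ0 _)]
    exact hβ1 _
  -- each mV-measurable set is a preimage
  have hsetint : ∀ u : Set ℝ, MeasurableSet u → ∀ t' : Set (Fin dz → ℝ), MeasurableSet t' →
      ∫ ω in V ⁻¹' u ∩ Z ⁻¹' t', β (V ω) ∂μ' =
        (μ' (ε ⁻¹' s ∩ (V ⁻¹' u ∩ Z ⁻¹' t'))).toReal := by
    intro u hu t' ht'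
    rw [integral_eq_lintegral_of_nonneg_ae (ae_of_all _ fun ω => hβ0 (V ω))
      ((hβmeas.comp hV).aestronglyMeasurable.restrict), ← IDμ' u hu t' ht']
  have claim1 : (fun ω => β (V ω)) =ᵐ[μ'] μ'[(ε ⁻¹' s).indicator (fun _ => (1:ℝ)) | MeasurableSpace.comap V inferInstance] := by
    refine ae_eq_condExp_of_forall_setIntegral_eq hle
      ((integrable_const (1:ℝ)).indicator (hε hs)) (fun s' _ _ => hβVint.integrableOn)
      ?_ hβVsm.aestronglyMeasurable
    rintro s' ⟨u, hu, rfl⟩ -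
    have h1 : ∫ ω in V ⁻¹' u, (ε ⁻¹' s).indicator (fun _ => (1:ℝ)) ω ∂μ' =
        (μ' (ε ⁻¹' s ∩ V ⁻¹' u)).toReal := by
      rw [show (fun _ : Ω => (1:ℝ)) = (1 : Ω → ℝ) from rfl,
        integral_indicator_one (hε hs), measureReal_def, Measure.restrict_apply (hε hs)]
    rw [h1]
    have h2 := hsetint u hu univ MeasurableSet.univ
    simp only [preimage_univ, inter_univ] at h2
    rw [h2]
  set condB := μ'[(Z ⁻¹' t).indicator (fun _ => (1:ℝ)) | MeasurableSpace.comap V inferInstance] with hcondBdef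
  have claim2 : (fun ω => β (V ω) * condB ω) =ᵐ[μ']
      μ'[(ε ⁻¹' s ∩ Z ⁻¹' t).indicator (fun _ => (1:ℝ)) | MeasurableSpace.comap V inferInstance] := by
    refine ae_eq_condExp_of_forall_setIntegral_eq hle
      ((integrable_const (1:ℝ)).indicator ((hε hs).inter (hZ ht)))
      (fun s' _ _ => ?_) ?_ ((hβVsm.mul stronglyMeasurable_condExp).aestronglyMeasurable)
    · refine (Integrable.bdd_mul (c := 1) integrable_condExp
        ((hβmeas.comp hV).aestronglyMeasurable) ?_).integrableOn
      refine ae_of_all _ fun ω => ?_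
      simp only [Function.comp_apply, Real.norm_eq_abs]
      rw [abs_of_nonneg (hβ0 _)]
      exact hβ1 _
    · rintro s' ⟨u, hu, rfl⟩ -
      have hindB : Integrable ((Z ⁻¹' t).indicator (fun _ => (1:ℝ))) μ' :=
        (integrable_const (1:ℝ)).indicator (hZ ht)
      -- pull-out property
      have hVu_mV : MeasurableSet[MeasurableSpace.comap V inferInstance] (V ⁻¹' u) := ⟨u, hu, rfl⟩
      have hfsm : StronglyMeasurable[MeasurableSpace.comap V inferInstance] ((V ⁻¹' u).indicator (fun ω => β (V ω))) :=
        hβVsm.indicator hVu_mV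
      have hprodint : Integrable (((V ⁻¹' u).indicator (fun ω => β (V ω))) *
          ((Z ⁻¹' t).indicator (fun _ => (1:ℝ)))) μ' := by
        refine Integrable.bdd_mul (c := 1) hindB ?_ (ae_of_all _ fun ω => ?_)
        · exact ((hβmeas.comp hV).indicator (hV hu)).aestronglyMeasurable
        · rw [Real.norm_eq_abs]
          rcases Set.indicator_eq_zero_or_self (V ⁻¹' u) (fun ω => β (V ω)) ω with h | h <;>
            rw [h]
          · simp
          · rw [abs_of_nonneg (hβ0 _)]
            exact hβ1 _
      have hpull := condExp_mul_of_stronglyMeasurable_left hfsm hprodint hindB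
      have hLHS : ∫ ω in V ⁻¹' u, β (V ω) * condB ω ∂μ' =
          ∫ ω in V ⁻¹' u ∩ Z ⁻¹' t, β (V ω) ∂μ' := by
        rw [← integral_indicator (hV hu)]
        have h3 : ∀ ω, (V ⁻¹' u).indicator (fun ω => β (V ω) * condB ω) ω =
            (((V ⁻¹' u).indicator (fun ω => β (V ω))) * condB) ω := by
          intro ω
          simp only [Pi.mul_apply]
          exact Set.indicator_mul_left _ _ _
        rw [show ((V ⁻¹' u).indicator fun ω => β (V ω) * condB ω) =
          (((V ⁻¹' u).indicator fun ω => β (V ω)) * condB) from funext h3]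
        rw [integral_congr_ae hpull.symm, integral_condExp hle]
        have h4 : ∀ ω, (((V ⁻¹' u).indicator (fun ω => β (V ω))) *
            ((Z ⁻¹' t).indicator (fun _ => (1:ℝ)))) ω =
            (V ⁻¹' u ∩ Z ⁻¹' t).indicator (fun ω => β (V ω)) ω := by
          intro ω
          simp only [Pi.mul_apply, Set.indicator_apply, mem_inter_iff, mem_preimage]
          by_cases h5 : V ω ∈ u <;> by_cases h6 : Z ω ∈ t <;> simp [h5, h6]
        rw [show (((V ⁻¹' u).indicator fun ω => β (V ω)) *
          ((Z ⁻¹' t).indicator fun _ => (1:ℝ))) =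
          ((V ⁻¹' u ∩ Z ⁻¹' t).indicator fun ω => β (V ω)) from funext h4]
        rw [integral_indicator ((hV hu).inter (hZ ht))]
      rw [hLHS, hsetint u hu t ht]
      rw [show (fun _ : Ω => (1:ℝ)) = (1 : Ω → ℝ) from rfl,
        integral_indicator_one ((hε hs).inter (hZ ht)), measureReal_def,
        Measure.restrict_apply ((hε hs).inter (hZ ht))]
      congr 2
      ext ω
      simp only [mem_inter_iff, mem_preimage]
      tauto
  filter_upwards [claim1, claim2] with ω h1 h2
  rw [← h2, ← h1]
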